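/- Let k ≤ m ≤ n, let W be a real n×(n−m) matrix with orthonormal columns, and let X be a real n×k matrix with orthonormal columns. Then the infimum, over all real n×k matrices Y with orthonormal columns satisfying Wᵀ Y = 0, of the squared chordal distance k − ‖Xᵀ Y‖_F² equals ‖Xᵀ W‖_F², and this infimum is attained. -/

import Mathlib

open scoped Matrix
open scoped RealInnerProductSpace
open Module Submodule

/-- Squared Frobenius norm of a real matrix. -/
noncomputable def frobSq {α β : Type*} [Fintype α] [Fintype β]
    (M : Matrix α β ℝ) : ℝ :=
  ∑ i, ∑ j, (M i j) ^ 2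

lemma exists_orthonormal_fin_span {V : Type*} [NormedAddCommGroup V]
    [InnerProductSpace ℝ V] [FiniteDimensional ℝ V] {k : ℕ} (hk : k ≤ finrank ℝ V)
    (p : Fin k → V) :
    ∃ y : Fin k → V, Orthonormal ℝ y ∧ ∀ a, p a ∈ span ℝ (Set.range y) := by
  classical
  set S : Submodule ℝ V := span ℝ (Set.range p) with hS
  have hd : finrank ℝ S ≤ k := by simpa [Set.finrank] using finrank_range_le_card (R := ℝ) p
  set d := finrank ℝ S with hdd
  let c : Fin d → V := fun i => ((stdOrthonormalBasis ℝ S) i : V)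
  have hc : Orthonormal ℝ c := by
    rw [orthonormal_iff_ite]
    intro i j
    have := orthonormal_iff_ite.1 (stdOrthonormalBasis ℝ S).orthonormal i j
    rwa [Submodule.coe_inner] at this
  have hb : span ℝ (Set.range ⇑(stdOrthonormalBasis ℝ S)) = ⊤ := by
    simpa using (stdOrthonormalBasis ℝ S).toBasis.span_eq
  have hcs : span ℝ (Set.range c) = S := by
    have h1 : Set.range c = S.subtype '' Set.range ⇑(stdOrthonormalBasis ℝ S) := by
      rw [← Set.range_comp]; rfl
    rw [h1, Submodule.span_image, hb, Submodule.map_subtype_top]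
  set mV := finrank ℝ V with hmV
  let v : Fin mV → V := fun i => if h : (i : ℕ) < d then c ⟨i, h⟩ else 0
  let s : Set (Fin mV) := {i | (i : ℕ) < d}
  have hv : Orthonormal ℝ (s.restrict v) := by
    rw [orthonormal_iff_ite]
    rintro ⟨i, hi⟩ ⟨j, hj⟩
    have hi' : (i : ℕ) < d := hi
    have hj' : (j : ℕ) < d := hj
    have := orthonormal_iff_ite.1 hc ⟨i, hi'⟩ ⟨j, hj'⟩
    show ⟪v i, v j⟫ = _
    simp only [Set.restrict_apply, v, dif_pos hi', dif_pos hj']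
    rw [this]
    congr 1
    simp [Fin.ext_iff, Subtype.ext_iff]
  obtain ⟨b, hb2⟩ := hv.exists_orthonormalBasis_extension_of_card_eq (by simp [hmV])
  refine ⟨fun j => b (Fin.castLE hk j), b.orthonormal.comp _ (Fin.castLE_injective hk), ?_⟩
  intro a
  have hpa : p a ∈ S := subset_span (Set.mem_range_self a)
  rw [← hcs] at hpa
  refine span_le.2 ?_ hpa
  rintro _ ⟨i, rfl⟩
  apply subset_span
  have hik : (i : ℕ) < k := lt_of_lt_of_le i.2 hd
  refine ⟨⟨(i : ℕ), hik⟩, ?_⟩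
  have hmem : (Fin.castLE hk ⟨(i : ℕ), hik⟩) ∈ s := by
    simp [s]
  show b (Fin.castLE hk ⟨(i : ℕ), hik⟩) = c i
  rw [hb2 _ hmem]
  simp [v, i.2]

/-- The squared chordal distance `k − ‖Xᵀ Y‖_F²` from a `k`-plane `X` to the
totally geodesic submanifold `G(k,m)` of `k`-planes orthogonal to `W` has
least value `‖Xᵀ W‖_F²`, and this value is attained. -/
theorem chordal_dist_to_grassmann_submanifold (n m k : ℕ) (hk : k ≤ m) (hm : m ≤ n)
    (W : Matrix (Fin n) (Fin (n - m)) ℝ) (hW : Wᵀ * W = 1)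
    (X : Matrix (Fin n) (Fin k) ℝ) (hX : Xᵀ * X = 1) :
    IsLeast {r : ℝ | ∃ Y : Matrix (Fin n) (Fin k) ℝ,
        Yᵀ * Y = 1 ∧ Wᵀ * Y = 0 ∧ r = (k : ℝ) - frobSq (Xᵀ * Y)}
      (frobSq (Xᵀ * W)) := by
  classical
  set w : Fin (n - m) → EuclideanSpace ℝ (Fin n) := fun j => WithLp.toLp 2 (fun i => W i j) with hw
  set x : Fin k → EuclideanSpace ℝ (Fin n) := fun a => WithLp.toLp 2 (fun i => X i a) with hx
  have hinner : ∀ u v : EuclideanSpace ℝ (Fin n), ⟪u, v⟫ = ∑ i, u i * v i := by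
    intro u v; simp [PiLp.inner_apply, mul_comm]
  have hWin : ∀ i j, ⟪w i, w j⟫ = if i = j then (1 : ℝ) else 0 := by
    intro i j
    have h := congrArg (fun M => M i j) hW
    simp only [Matrix.mul_apply, Matrix.transpose_apply, Matrix.one_apply] at h
    rw [hinner]; exact h
  have hXin : ∀ a b, ⟪x a, x b⟫ = if a = b then (1 : ℝ) else 0 := by
    intro a b
    have h := congrArg (fun M => M a b) hX
    simp only [Matrix.mul_apply, Matrix.transpose_apply, Matrix.one_apply] at h
    rw [hinner]; exact h
  have hwon : Orthonormal ℝ w := orthonormal_iff_ite.mpr hWin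
  set V : Submodule ℝ (EuclideanSpace ℝ (Fin n)) := (span ℝ (Set.range w))ᗮ with hV
  have memV : ∀ v : EuclideanSpace ℝ (Fin n), (∀ j, ⟪w j, v⟫ = 0) → v ∈ V := by
    intro v h
    rw [hV, Submodule.mem_orthogonal]
    intro u hu
    obtain ⟨c, rfl⟩ := (mem_span_range_iff_exists_fun ℝ).1 hu
    rw [sum_inner]
    simp only [real_inner_smul_left, h, mul_zero, Finset.sum_const_zero]
  have memV' : ∀ v : EuclideanSpace ℝ (Fin n), v ∈ V → ∀ j, ⟪w j, v⟫ = 0 := by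
    intro v hv j
    rw [hV, Submodule.mem_orthogonal] at hv
    exact hv _ (subset_span ⟨j, rfl⟩)
  set p : Fin k → EuclideanSpace ℝ (Fin n) :=
    fun a => x a - ∑ j, ⟪w j, x a⟫ • w j with hp
  have hpw : ∀ j a, ⟪w j, p a⟫ = 0 := by
    intro j a
    simp only [hp, inner_sub_right, inner_sum, real_inner_smul_right, hWin,
      mul_ite, mul_one, mul_zero, Finset.sum_ite_eq, Finset.mem_univ, if_true]
    exact sub_self _
  have hpV : ∀ a, p a ∈ V := fun a => memV _ (fun j => hpw j a)
  have hxpv : ∀ (a) (v : EuclideanSpace ℝ (Fin n)), v ∈ V → ⟪x a, v⟫ = ⟪p a, v⟫ := by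
    intro a v hv
    have h1 : x a - p a = ∑ j, ⟪w j, x a⟫ • w j := by simp [hp]
    have h2 : ⟪x a - p a, v⟫ = 0 := by
      rw [h1, sum_inner]
      simp only [real_inner_smul_left, memV' v hv, mul_zero, Finset.sum_const_zero]
    rw [inner_sub_left] at h2
    linarith
  have hpp : ∀ a, ⟪p a, p a⟫ = 1 - ∑ j, ⟪w j, x a⟫ ^ 2 := by
    intro a
    have h1 : ⟪x a, p a⟫ = ⟪p a, p a⟫ := hxpv a (p a) (hpV a)
    have h2 : ⟪x a, p a⟫ = 1 - ∑ j, ⟪w j, x a⟫ ^ 2 := by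
      simp only [hp, inner_sub_right, inner_sum, real_inner_smul_right]
      rw [hXin a a, if_pos rfl]
      congr 1
      refine Finset.sum_congr rfl fun j _ => ?_
      rw [real_inner_comm (x a) (w j), sq]
    linarith
  have hfrobXW : frobSq (Xᵀ * W) = ∑ a, ∑ j, ⟪w j, x a⟫ ^ 2 := by
    unfold frobSq
    refine Finset.sum_congr rfl fun a _ => Finset.sum_congr rfl fun j _ => ?_
    have : (Xᵀ * W) a j = ⟪w j, x a⟫ := by
      rw [hinner]
      simp only [Matrix.mul_apply, Matrix.transpose_apply]
      exact Finset.sum_congr rfl fun i _ => mul_comm _ _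
    rw [this]
  have hfrobXY : ∀ Y : Matrix (Fin n) (Fin k) ℝ,
      frobSq (Xᵀ * Y) = ∑ a, ∑ b, (⟪x a, (WithLp.toLp 2 (fun i => Y i b) : EuclideanSpace ℝ (Fin n))⟫) ^ 2 := by
    intro Y
    unfold frobSq
    refine Finset.sum_congr rfl fun a _ => Finset.sum_congr rfl fun b _ => ?_
    rw [hinner]
    simp only [Matrix.mul_apply, Matrix.transpose_apply]
    rfl
  constructor
  · -- attained
    have hkV : k ≤ finrank ℝ V := by
      have h1 : finrank ℝ (span ℝ (Set.range w)) = n - m := by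
        rw [finrank_span_eq_card hwon.linearIndependent, Fintype.card_fin]
      have h2 := Submodule.finrank_add_finrank_orthogonal (K := span ℝ (Set.range w))
      rw [h1, finrank_euclideanSpace_fin] at h2
      rw [hV]
      omega
    obtain ⟨y', hy'on, hy'span⟩ := exists_orthonormal_fin_span hkV (fun a => ⟨p a, hpV a⟩)
    set y : Fin k → EuclideanSpace ℝ (Fin n) := fun b => (y' b : EuclideanSpace ℝ (Fin n)) with hy
    have hyon : Orthonormal ℝ y := by
      rw [orthonormal_iff_ite]
      intro a b
      have := orthonormal_iff_ite.1 hy'on a b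
      rwa [Submodule.coe_inner] at this
    have hyV : ∀ b, y b ∈ V := fun b => (y' b).2
    have hpspan : ∀ a, p a ∈ span ℝ (Set.range y) := by
      intro a
      have h1 := Submodule.mem_map_of_mem (f := V.subtype) (hy'span a)
      rw [← Submodule.span_image, ← Set.range_comp] at h1
      exact h1
    have parseval : ∀ a, ∑ b, ⟪p a, y b⟫ ^ 2 = ⟪p a, p a⟫ := by
      intro a
      obtain ⟨c, hc⟩ := (mem_span_range_iff_exists_fun ℝ).1 (hpspan a)
      have hcoef : ∀ b, ⟪p a, y b⟫ = c b := by
        intro b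
        rw [← hc, sum_inner]
        simp only [real_inner_smul_left, orthonormal_iff_ite.1 hyon,
          mul_ite, mul_one, mul_zero, Finset.sum_ite_eq', Finset.mem_univ, if_true]
      have h2 : ⟪p a, p a⟫ = ∑ b, c b * ⟪y b, p a⟫ := by
        nth_rewrite 1 [← hc]
        rw [sum_inner]
        simp only [real_inner_smul_left]
      rw [h2]
      refine Finset.sum_congr rfl fun b _ => ?_
      rw [real_inner_comm (p a) (y b), hcoef b, sq]
    refine ⟨Matrix.of (fun i b => y b i), ?_, ?_, ?_⟩
    · ext a b
      have : ⟪y a, y b⟫ = ∑ i, y a i * y b i := hinner _ _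
      rw [orthonormal_iff_ite.1 hyon a b] at this
      simp only [Matrix.mul_apply, Matrix.transpose_apply, Matrix.of_apply, Matrix.one_apply]
      exact this.symm
    · ext j b
      have h0 : ⟪w j, y b⟫ = 0 := memV' _ (hyV b) j
      rw [hinner] at h0
      simp only [Matrix.mul_apply, Matrix.transpose_apply, Matrix.of_apply, Matrix.zero_apply]
      exact h0
    · have hfrob : frobSq (Xᵀ * Matrix.of (fun i b => y b i))
          = ∑ a, ∑ b, ⟪x a, y b⟫ ^ 2 := hfrobXY _
      rw [hfrob]
      have : ∀ a, ∑ b, ⟪x a, y b⟫ ^ 2 = 1 - ∑ j, ⟪w j, x a⟫ ^ 2 := by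
        intro a
        calc ∑ b, ⟪x a, y b⟫ ^ 2 = ∑ b, ⟪p a, y b⟫ ^ 2 := by
              refine Finset.sum_congr rfl fun b _ => ?_
              rw [hxpv a (y b) (hyV b)]
          _ = ⟪p a, p a⟫ := parseval a
          _ = 1 - ∑ j, ⟪w j, x a⟫ ^ 2 := hpp a
      rw [Finset.sum_congr rfl fun a _ => this a, Finset.sum_sub_distrib,
        Finset.sum_const, Finset.card_univ, Fintype.card_fin, nsmul_eq_mul, mul_one,
        hfrobXW]
      ring
  · -- lower bound
    rintro r ⟨Y, hY1, hY2, rfl⟩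
    set y : Fin k → EuclideanSpace ℝ (Fin n) := fun b => WithLp.toLp 2 (fun i => Y i b) with hy
    have hYin : ∀ a b, ⟪y a, y b⟫ = if a = b then (1 : ℝ) else 0 := by
      intro a b
      have h := congrArg (fun M => M a b) hY1
      simp only [Matrix.mul_apply, Matrix.transpose_apply, Matrix.one_apply] at h
      rw [hinner]; exact h
    have hyon : Orthonormal ℝ y := orthonormal_iff_ite.mpr hYin
    have hyV : ∀ b, y b ∈ V := by
      intro b
      refine memV _ fun j => ?_
      have h := congrArg (fun M => M j b) hY2
      simp only [Matrix.mul_apply, Matrix.transpose_apply, Matrix.zero_apply] at h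
      rw [hinner]; exact h
    have bessel : ∀ a, ∑ b, ⟪p a, y b⟫ ^ 2 ≤ ⟪p a, p a⟫ := by
      intro a
      have h := hyon.sum_inner_products_le (p a) (s := Finset.univ)
      rw [real_inner_self_eq_norm_sq]
      refine le_trans (le_of_eq ?_) h
      refine Finset.sum_congr rfl fun b _ => ?_
      rw [real_inner_comm, Real.norm_eq_abs, sq_abs]
    have hfrob : frobSq (Xᵀ * Y) = ∑ a, ∑ b, ⟪x a, y b⟫ ^ 2 := hfrobXY Y
    have key : frobSq (Xᵀ * Y) ≤ (k : ℝ) - frobSq (Xᵀ * W) := by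
      rw [hfrob, hfrobXW]
      have h1 : ∀ a, ∑ b, ⟪x a, y b⟫ ^ 2 ≤ 1 - ∑ j, ⟪w j, x a⟫ ^ 2 := by
        intro a
        calc ∑ b, ⟪x a, y b⟫ ^ 2 = ∑ b, ⟪p a, y b⟫ ^ 2 := by
              refine Finset.sum_congr rfl fun b _ => ?_
              rw [hxpv a (y b) (hyV b)]
          _ ≤ ⟪p a, p a⟫ := bessel a
          _ = 1 - ∑ j, ⟪w j, x a⟫ ^ 2 := hpp a
      calc ∑ a, ∑ b, ⟪x a, y b⟫ ^ 2
          ≤ ∑ a : Fin k, (1 - ∑ j, ⟪w j, x a⟫ ^ 2) := Finset.sum_le_sum fun a _ => h1 a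
        _ = (k : ℝ) - ∑ a, ∑ j, ⟪w j, x a⟫ ^ 2 := by
            rw [Finset.sum_sub_distrib, Finset.sum_const, Finset.card_univ,
              Fintype.card_fin, nsmul_eq_mul, mul_one]
    linarith
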